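/- There is an absolute constant C > 0 such that for every dimension d ≥ 1, every n ≥ 1, every family of points v_1, …, v_n ∈ [0,1]^d, and every minimal spanning tree T over v_1, …, v_n, one has Σ_{{i,j} ∈ E(T)} ‖v_i − v_j‖^d ≤ (C·√d)^d; that is, in the critical case α = d the constant C(d) can be taken to be C·√d with C independent of d. -/

import Mathlib

/-- The `α`-energy of a graph `T` on vertex set `Fin n`, with vertex `i` placed at
`v i` in the metric space `X`: the sum over the edges `{i,j}` of `T` of
`dist (v i) (v j) ^ α`. -/
noncomputable def energy {X : Type*} [MetricSpace X] {n : ℕ} (v : Fin n → X)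
    (T : SimpleGraph (Fin n)) (α : ℝ) : ℝ :=
  ∑ e ∈ T.edgeSet.toFinite.toFinset,
    Sym2.lift ⟨fun i j => dist (v i) (v j) ^ α, fun i j => by simp only [dist_comm]⟩ e

/-- `T` is a minimal spanning tree over the points `v 0, …, v (n-1)`: it is a tree on
the vertex set `Fin n` minimizing the total edge length `E₁` among all such trees. -/
def IsMST {X : Type*} [MetricSpace X] {n : ℕ} (v : Fin n → X)
    (T : SimpleGraph (Fin n)) : Prop :=
  T.IsTree ∧ ∀ T' : SimpleGraph (Fin n), T'.IsTree → energy v T 1 ≤ energy v T' 1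

open SimpleGraph Finset MeasureTheory

variable {V : Type*}

lemma reach_side_aux {T : SimpleGraph V} {a b x y : V} (w : T.Walk x y)
    (hy : (T \ fromEdgeSet {s(a,b)}).Reachable y a ∨ (T \ fromEdgeSet {s(a,b)}).Reachable y b) :
    (T \ fromEdgeSet {s(a,b)}).Reachable x a ∨ (T \ fromEdgeSet {s(a,b)}).Reachable x b := by
  induction w with
  | nil => exact hy
  | @cons x z _ h p ih =>
    rcases ih hy with h1 | h1 <;>
    · by_cases hxy : s(x, z) = s(a, b)
      · rw [Sym2.eq_iff] at hxy
        rcases hxy with ⟨rfl, rfl⟩ | ⟨rfl, rfl⟩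
        · exact Or.inl (Reachable.refl _)
        · exact Or.inr (Reachable.refl _)
      · have hadj : (T \ fromEdgeSet {s(a,b)}).Adj x z := by
          rw [sdiff_adj, fromEdgeSet_adj]
          exact ⟨h, by simp [hxy]⟩
        first
          | exact Or.inl (hadj.reachable.trans h1)
          | exact Or.inr (hadj.reachable.trans h1)

lemma reach_side {T : SimpleGraph V} (hT : T.Connected) (a b x : V) :
    (T \ fromEdgeSet {s(a,b)}).Reachable x a ∨ (T \ fromEdgeSet {s(a,b)}).Reachable x b := by
  obtain ⟨w⟩ := hT.preconnected x a
  exact reach_side_aux w (Or.inl (Reachable.refl a))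

lemma swap_isTree {T : SimpleGraph V} (hT : T.IsTree) {a b c : V}
    (hab : T.Adj a b) (hc : (T \ fromEdgeSet {s(a,b)}).Reachable c a) (hca : c ≠ a) :
    ((T \ fromEdgeSet {s(a,b)}) ⊔ edge b c).IsTree ∧ b ≠ c ∧ ¬ T.Adj b c := by
  set G := T \ fromEdgeSet {s(a,b)} with hG
  have hbridge : ¬ G.Reachable a b :=
    isBridge_iff.mp ((isAcyclic_iff_forall_adj_isBridge.mp hT.2) hab)
  have hbc : b ≠ c := by
    rintro rfl
    exact hbridge hc.symm
  have hGle : G ≤ T := sdiff_le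
  have hnadj : ¬ T.Adj b c := by
    intro h
    have hs : s(b, c) ≠ s(a, b) := by
      intro h'
      rw [Sym2.eq_iff] at h'
      rcases h' with ⟨rfl, rfl⟩ | ⟨-, rfl⟩
      · exact hab.ne rfl
      · exact hca rfl
    have : G.Adj b c := by
      rw [hG, sdiff_adj, fromEdgeSet_adj]
      exact ⟨h, by simp [hs]⟩
    exact hbridge (this.reachable.trans hc).symm
  have hT''adj : ((G ⊔ edge b c)).Adj b c := by
    refine Or.inr ?_
    rw [edge_adj]
    exact ⟨Or.inl ⟨rfl, rfl⟩, hbc⟩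
  have hreach : ∀ x, (G ⊔ edge b c).Reachable x a := by
    intro x
    rcases reach_side hT.1 a b x with h | h
    · exact h.mono le_sup_left
    · exact (h.mono le_sup_left).trans ((hT''adj.reachable).trans (hc.mono le_sup_left))
  have hne : Nonempty V := ⟨a⟩
  have hconn : (G ⊔ edge b c).Connected := by
    refine Connected.mk ?_
    intro u w
    exact (hreach u).trans (hreach w).symm
  refine ⟨⟨hconn, ?_⟩, hbc, hnadj⟩
  intro x p hp
  by_cases hmem : s(b, c) ∈ p.edges
  · have := (adj_and_reachable_delete_edges_iff_exists_cycle.mpr ⟨x, p, hp, hmem⟩).2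
    have hle : (G ⊔ edge b c) \ fromEdgeSet {s(b,c)} ≤ G := by
      intro u w huw
      rw [sdiff_adj] at huw
      rcases huw.1 with h | h
      · exact h
      · exfalso
        apply huw.2
        rw [fromEdgeSet_adj]
        rw [edge_adj] at h
        rcases h.1 with ⟨rfl, rfl⟩ | ⟨rfl, rfl⟩
        · exact ⟨rfl, h.2⟩
        · exact ⟨Sym2.eq_swap, h.2⟩
    have hGbc : G.Reachable b c := this.mono hle
    exact hbridge (hGbc.trans hc).symm
  · have hpe : ∀ e ∈ p.edges, e ∈ T.edgeSet := by
      intro e he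
      have := p.edges_subset_edgeSet he
      rw [edgeSet_sup] at this
      rcases this with h | h
      · exact (edgeSet_mono hGle) h
      · exfalso
        have : e = s(b, c) := by
          have := h
          rw [edge, edgeSet_fromEdgeSet] at this
          simpa using this.1
        exact hmem (this ▸ he)
    exact hT.2 (p.transfer T hpe) (hp.transfer hpe)

lemma swap_edgeSet {T : SimpleGraph V} {a b c : V} (hbc : b ≠ c) :
    ((T \ fromEdgeSet {s(a,b)}) ⊔ edge b c).edgeSet
      = (T.edgeSet \ {s(a,b)}) ∪ {s(b,c)} := by
  rw [edgeSet_sup, edgeSet_sdiff, edgeSet_fromEdgeSet, edgeSet_sdiff_sdiff_isDiag,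
    edge, edgeSet_fromEdgeSet]
  congr 1
  ext e
  simp only [Set.mem_diff, Set.mem_singleton_iff, Set.mem_setOf_eq]
  constructor
  · rintro ⟨rfl, -⟩; rfl
  · rintro rfl; exact ⟨rfl, by simp [Sym2.isDiag_iff_proj_eq, hbc]⟩

variable {X : Type*} [MetricSpace X] {n : ℕ}

lemma mst_exchange_core {v : Fin n → X} {T : SimpleGraph (Fin n)}
    (hT : IsMST v T) {a b c : Fin n} (hab : T.Adj a b)
    (hc : (T \ fromEdgeSet {s(a,b)}).Reachable c a) :
    dist (v a) (v b) ≤ dist (v b) (v c) := by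
  by_cases hca : c = a
  · subst hca
    exact le_of_eq (_root_.dist_comm _ _)
  obtain ⟨htree, hbc, hnadj⟩ := swap_isTree hT.1 hab hc hca
  set T'' := (T \ fromEdgeSet {s(a,b)}) ⊔ edge b c with hT''
  set f : Sym2 (Fin n) → ℝ :=
    Sym2.lift ⟨fun i j => dist (v i) (v j) ^ (1:ℝ), fun i j => by simp only [_root_.dist_comm]⟩
    with hf
  have hmemab : s(a,b) ∈ T.edgeSet.toFinite.toFinset := by
    rw [Set.Finite.mem_toFinset, mem_edgeSet]; exact hab
  have hmembc : s(b,c) ∉ (T.edgeSet.toFinite.toFinset).erase s(a,b) := by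
    intro h
    exact hnadj (mem_edgeSet _ |>.mp ((Set.Finite.mem_toFinset _).mp (Finset.mem_of_mem_erase h)))
  have hfinset : T''.edgeSet.toFinite.toFinset
      = insert s(b,c) ((T.edgeSet.toFinite.toFinset).erase s(a,b)) := by
    ext e
    simp only [Set.Finite.mem_toFinset, hT'', swap_edgeSet hbc, Set.mem_union, Set.mem_diff,
      Set.mem_singleton_iff, Finset.mem_insert, Finset.mem_erase, Set.Finite.mem_toFinset]
    tauto
  have henergy : energy v T'' 1 = f s(b,c) + (energy v T 1 - f s(a,b)) := by
    rw [energy, hfinset, Finset.sum_insert hmembc, Finset.sum_erase_eq_sub hmemab]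
    rfl
  have hle := hT.2 T'' htree
  rw [henergy] at hle
  have h1 : f s(a,b) = dist (v a) (v b) := by simp [hf]
  have h2 : f s(b,c) = dist (v b) (v c) := by simp [hf]
  rw [h1, h2] at hle
  linarith

lemma mst_exchange {v : Fin n → X} {T : SimpleGraph (Fin n)}
    (hT : IsMST v T) {a b c d : Fin n} (hab : T.Adj a b) (hcd : T.Adj c d)
    (hne : s(c,d) ≠ s(a,b)) :
    ∃ w, (w = a ∨ w = b) ∧ dist (v a) (v b) ≤ dist (v w) (v c)
      ∧ dist (v a) (v b) ≤ dist (v w) (v d) := by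
  have hGcd : (T \ fromEdgeSet {s(a,b)}).Adj c d := by
    rw [sdiff_adj, fromEdgeSet_adj]
    exact ⟨hcd, by simp [hne]⟩
  rcases reach_side (hT.1.1) a b c with hc | hc
  · refine ⟨b, Or.inr rfl, mst_exchange_core hT hab hc, ?_⟩
    have hd : (T \ fromEdgeSet {s(a,b)}).Reachable d a := hGcd.symm.reachable.trans hc
    exact mst_exchange_core hT hab hd
  · have hswap : (T \ fromEdgeSet {s(b,a)}) = (T \ fromEdgeSet {s(a,b)}) := by
      rw [Sym2.eq_swap]
    refine ⟨a, Or.inl rfl, ?_, ?_⟩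
    · have := mst_exchange_core hT hab.symm (hswap ▸ hc)
      rwa [_root_.dist_comm (v b) (v a)] at this
    · have hd : (T \ fromEdgeSet {s(a,b)}).Reachable d b := hGcd.symm.reachable.trans hc
      have := mst_exchange_core hT hab.symm (hswap ▸ hd)
      rwa [_root_.dist_comm (v b) (v a)] at this

section Geometry

variable {E : Type*} [NormedAddCommGroup E] [InnerProductSpace ℝ E]

lemma midpoint_far {w c d : E} {L : ℝ} (h1 : L ≤ dist w c) (h2 : L ≤ dist w d)
    (h3 : dist c d ≤ L) : L / 3 + L / 2 ≤ dist w (midpoint ℝ c d) := by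
  have hL : 0 ≤ L := le_trans dist_nonneg h3
  have hp := parallelogram_law_with_norm ℝ (w - c) (w - d)
  have e1 : w - c + (w - d) = (2:ℝ) • (w - midpoint ℝ c d) := by
    rw [midpoint_eq_smul_add]
    rw [smul_sub, smul_smul]
    norm_num
    module
  have e2 : w - c - (w - d) = d - c := by abel
  have hn1 : ‖w - c + (w - d)‖ = 2 * dist w (midpoint ℝ c d) := by
    rw [e1, norm_smul, dist_eq_norm]
    simp
  have hn2 : ‖w - c - (w - d)‖ = dist c d := by
    rw [e2, ← dist_eq_norm, _root_.dist_comm]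
  rw [hn1, hn2] at hp
  have hwc : dist w c * dist w c = ‖w - c‖ * ‖w - c‖ := by rw [dist_eq_norm]
  have hwd : dist w d * dist w d = ‖w - d‖ * ‖w - d‖ := by rw [dist_eq_norm]
  have hD : 0 ≤ dist w (midpoint ℝ c d) := dist_nonneg
  have hcd : 0 ≤ dist c d := dist_nonneg
  nlinarith [hp, h1, h2, h3, hL, hD, hcd, sq_nonneg (dist w (midpoint ℝ c d) - 5 * L / 6),
    sq_nonneg (dist w c - L), sq_nonneg (dist w d - L)]

end Geometry

noncomputable def elen {X : Type*} [MetricSpace X] {n : ℕ} (v : Fin n → X) :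
    Sym2 (Fin n) → ℝ :=
  Sym2.lift ⟨fun i j => dist (v i) (v j), fun i j => _root_.dist_comm _ _⟩

noncomputable def emid {E : Type*} [NormedAddCommGroup E] [InnerProductSpace ℝ E] {n : ℕ}
    (v : Fin n → E) : Sym2 (Fin n) → E :=
  Sym2.lift ⟨fun i j => midpoint ℝ (v i) (v j), fun i j => midpoint_comm _ _⟩

section Sep

variable {E : Type*} [NormedAddCommGroup E] [InnerProductSpace ℝ E] {n : ℕ}

lemma sep_aux {v : Fin n → E} {T : SimpleGraph (Fin n)} (hT : IsMST v T)
    {a b c d : Fin n} (hab : T.Adj a b) (hcd : T.Adj c d) (hne : s(c,d) ≠ s(a,b))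
    (hle : dist (v c) (v d) ≤ dist (v a) (v b)) :
    (dist (v a) (v b) + dist (v c) (v d)) / 6
      ≤ dist (midpoint ℝ (v a) (v b)) (midpoint ℝ (v c) (v d)) := by
  obtain ⟨w, hw, h1, h2⟩ := mst_exchange hT hab hcd hne
  have hmf : dist (v a) (v b) / 3 + dist (v a) (v b) / 2
      ≤ dist (v w) (midpoint ℝ (v c) (v d)) := midpoint_far h1 h2 hle
  have hme : dist (v w) (midpoint ℝ (v a) (v b)) = dist (v a) (v b) / 2 := by
    rcases hw with rfl | rfl
    · rw [dist_left_midpoint]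
      simp [Real.norm_two]
      ring
    · rw [dist_right_midpoint]
      simp [Real.norm_two]
      ring
  have htri := dist_triangle (v w) (midpoint ℝ (v a) (v b)) (midpoint ℝ (v c) (v d))
  have htri2 := dist_triangle (v w) (midpoint ℝ (v c) (v d)) (midpoint ℝ (v a) (v b))
  rw [dist_comm (midpoint ℝ (v a) (v b))] at htri ⊢
  linarith

lemma sep {v : Fin n → E} {T : SimpleGraph (Fin n)} (hT : IsMST v T)
    {e f : Sym2 (Fin n)} (he : e ∈ T.edgeSet) (hf : f ∈ T.edgeSet) (hef : e ≠ f) :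
    (elen v e + elen v f) / 6 ≤ dist (emid v e) (emid v f) := by
  obtain ⟨⟨a, b⟩, rfl⟩ := e.exists_rep
  obtain ⟨⟨c, d⟩, rfl⟩ := f.exists_rep
  rw [SimpleGraph.mem_edgeSet] at he hf
  simp only [elen, emid, Sym2.lift_mk]
  rcases le_total (dist (v c) (v d)) (dist (v a) (v b)) with h | h
  · exact sep_aux hT he hf (fun hh => hef hh.symm) h
  · rw [dist_comm (midpoint ℝ (v a) (v b)), add_comm]
    exact sep_aux hT hf he hef h

end Sep

lemma exists_coord {d : ℕ} (hd : 1 ≤ d) (x y : EuclideanSpace ℝ (Fin d)) :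
    ∃ i, dist x y ≤ Real.sqrt d * |x i - y i| := by
  obtain ⟨i, -, hi⟩ := Finset.exists_max_image Finset.univ (fun i => |x i - y i|)
    ⟨⟨0, hd⟩, Finset.mem_univ _⟩
  refine ⟨i, ?_⟩
  rw [EuclideanSpace.dist_eq]
  have h1 : ∑ j, dist (x j) (y j) ^ 2 ≤ (d : ℝ) * (x i - y i) ^ 2 := by
    have : ∀ j ∈ Finset.univ, dist (x j) (y j) ^ 2 ≤ (x i - y i) ^ 2 := by
      intro j _
      rw [Real.dist_eq, ← sq_abs (x i - y i)]
      exact pow_le_pow_left₀ (abs_nonneg _) (hi j (Finset.mem_univ j)) 2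
    calc ∑ j, dist (x j) (y j) ^ 2 ≤ ∑ _j : Fin d, (x i - y i) ^ 2 :=
          Finset.sum_le_sum this
      _ = (d : ℝ) * (x i - y i) ^ 2 := by
          rw [Finset.sum_const, card_univ, Fintype.card_fin, nsmul_eq_mul]
  calc Real.sqrt (∑ j, dist (x j) (y j) ^ 2) ≤ Real.sqrt ((d:ℝ) * (x i - y i)^2) :=
        Real.sqrt_le_sqrt h1
    _ = Real.sqrt d * |x i - y i| := by
        rw [Real.sqrt_mul (by positivity), Real.sqrt_sq_eq_abs]

lemma dist_le_sqrt {d : ℕ} (x y : EuclideanSpace ℝ (Fin d))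
    (hx : ∀ i, x i ∈ Set.Icc (0:ℝ) 1) (hy : ∀ i, y i ∈ Set.Icc (0:ℝ) 1) :
    dist x y ≤ Real.sqrt d := by
  rw [EuclideanSpace.dist_eq]
  have h1 : ∑ j, dist (x j) (y j) ^ 2 ≤ (d : ℝ) := by
    calc ∑ j, dist (x j) (y j) ^ 2 ≤ ∑ _j : Fin d, (1:ℝ) := by
          refine Finset.sum_le_sum fun j _ => ?_
          have hxj := hx j; have hyj := hy j
          simp only [Set.mem_Icc] at hxj hyj
          rw [Real.dist_eq]
          nlinarith [abs_nonneg (x j - y j), abs_le.mpr (by constructor <;> linarith : -(1:ℝ) ≤ x j - y j ∧ x j - y j ≤ 1)]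
      _ = (d : ℝ) := by simp
  calc Real.sqrt (∑ j, dist (x j) (y j) ^ 2) ≤ Real.sqrt d := Real.sqrt_le_sqrt h1

lemma midpoint_coord {d : ℕ} (x y : EuclideanSpace ℝ (Fin d)) (i : Fin d) :
    midpoint ℝ x y i = (x i + y i) / 2 := by
  rw [midpoint_eq_smul_add]
  simp [EuclideanSpace, PiLp.smul_apply, PiLp.add_apply]
  ring

lemma box_volume {d : ℕ} (m : EuclideanSpace ℝ (Fin d)) (r : ℝ) :
    volume (Set.pi Set.univ (fun i => Set.Ioo (m i - r) (m i + r)))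
      = ENNReal.ofReal (2 * r) ^ d := by
  rw [volume_pi_pi]
  have : ∀ i : Fin d, volume (Set.Ioo (m i - r) (m i + r)) = ENNReal.ofReal (2 * r) := by
    intro i
    rw [Real.volume_Ioo]
    congr 1
    ring
  simp only [this]
  rw [Finset.prod_const, card_univ, Fintype.card_fin]

/-- There is an absolute constant `C > 0` such that in every dimension `d ≥ 1`, for all
`n ≥ 1`, all points in the cube `[0,1]^d` and every minimal spanning tree `T` over
them, `E_d(T) ≤ (C * √d)^d`: the constant in the critical case `α = d` can be taken to
be `C(d) = C·√d` with `C` independent of the dimension. -/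
theorem mst_energy_bound_critical_sqrt_d :
    ∃ C : ℝ, 0 < C ∧ ∀ d : ℕ, 1 ≤ d → ∀ n : ℕ, 1 ≤ n →
      ∀ v : Fin n → EuclideanSpace ℝ (Fin d), (∀ j i, v j i ∈ Set.Icc (0:ℝ) 1) →
      ∀ T : SimpleGraph (Fin n), IsMST v T →
        energy v T (d : ℝ) ≤ (C * Real.sqrt d) ^ (d : ℝ) := by
  refine ⟨4, by norm_num, ?_⟩
  intro d hd n hn v hv T hT
  classical
  set sd := Real.sqrt d with hsd_def
  have hsd : 0 < sd := Real.sqrt_pos.mpr (by exact_mod_cast Nat.pos_of_ne_zero (by omega))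
  set A := T.edgeSet.toFinite.toFinset with hA
  set L : Sym2 (Fin n) → ℝ := elen v with hL
  set m : Sym2 (Fin n) → EuclideanSpace ℝ (Fin d) := emid v with hm
  set r : Sym2 (Fin n) → ℝ := fun e => L e / (6 * sd) with hr
  set S : Sym2 (Fin n) → Set (Fin d → ℝ) :=
    fun e => Set.pi Set.univ (fun i => Set.Ioo (m e i - r e) (m e i + r e)) with hS
  -- basic facts
  have hL0 : ∀ e, 0 ≤ L e := by
    intro e
    obtain ⟨⟨a, b⟩, rfl⟩ := e.exists_rep
    simp only [hL, elen, Sym2.lift_mk]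
    exact dist_nonneg
  have hr0 : ∀ e, 0 ≤ r e := fun e => div_nonneg (hL0 e) (by positivity)
  have hLsd : ∀ e, L e ≤ sd := by
    intro e
    obtain ⟨⟨a, b⟩, rfl⟩ := e.exists_rep
    simp only [hL, elen, Sym2.lift_mk]
    exact dist_le_sqrt _ _ (hv a) (hv b)
  have hr16 : ∀ e, r e ≤ 1 / 6 := by
    intro e
    rw [hr]
    rw [div_le_div_iff₀ (by positivity) (by norm_num)]
    nlinarith [hLsd e, hsd.le]
  have hm01 : ∀ e i, m e i ∈ Set.Icc (0:ℝ) 1 := by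
    intro e i
    obtain ⟨⟨a, b⟩, rfl⟩ := e.exists_rep
    simp only [hm, emid, Sym2.lift_mk]
    rw [midpoint_coord]
    have h1 := hv a i; have h2 := hv b i
    simp only [Set.mem_Icc] at h1 h2 ⊢
    constructor <;> [linarith; linarith]
  -- disjointness
  have hdisj : (A : Set (Sym2 (Fin n))).PairwiseDisjoint S := by
    intro e he f hf hef
    rw [Set.Finite.coe_toFinset] at he hf
    rw [Function.onFun, Set.disjoint_left]
    intro x hxe hxf
    obtain ⟨i, hi⟩ := exists_coord hd (m e) (m f)
    have hsep := sep hT he hf hef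
    have hsep2 : (L e + L f) / 6 ≤ sd * |m e i - m f i| := le_trans hsep hi
    have habs : r e + r f ≤ |m e i - m f i| := by
      rw [hr]; beta_reduce
      rw [← add_div, div_le_iff₀ (by positivity)] at *
      nlinarith [hsep2, hsd]
    have hxe' := hxe i (Set.mem_univ i)
    have hxf' := hxf i (Set.mem_univ i)
    simp only [Set.mem_Ioo] at hxe' hxf'
    rcases abs_cases (m e i - m f i) with ⟨hc, -⟩ | ⟨hc, -⟩ <;> rw [hc] at habs <;> linarith
  have hmeas : ∀ e, MeasurableSet (S e) :=
    fun e => MeasurableSet.univ_pi (fun i => measurableSet_Ioo)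
  have hsub : ∀ e ∈ A, S e ⊆ Set.pi Set.univ (fun _ : Fin d => Set.Ioo (-(1:ℝ)/6) (7/6)) := by
    intro e _ x hx i _
    have hxi := hx i (Set.mem_univ i)
    simp only [Set.mem_Ioo] at hxi ⊢
    have h1 := hm01 e i
    have h2 := hr16 e
    simp only [Set.mem_Icc] at h1
    constructor <;> linarith [hxi.1, hxi.2]
  -- volume bound
  have hsum : ∑ e ∈ A, volume (S e)
      ≤ volume (Set.pi Set.univ (fun _ : Fin d => Set.Ioo (-(1:ℝ)/6) (7/6))) := by
    rw [← measure_biUnion_finset hdisj (fun e _ => hmeas e)]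
    exact measure_mono (Set.iUnion₂_subset hsub)
  have hbig : volume (Set.pi Set.univ (fun _ : Fin d => Set.Ioo (-(1:ℝ)/6) (7/6)))
      = ENNReal.ofReal (4/3) ^ d := by
    rw [volume_pi_pi]
    have : volume (Set.Ioo (-(1:ℝ)/6) (7/6)) = ENNReal.ofReal (4/3) := by
      rw [Real.volume_Ioo]; norm_num
    simp only [this]
    rw [Finset.prod_const, card_univ, Fintype.card_fin]
  have hvol : ∀ e, volume (S e) = ENNReal.ofReal ((2 * r e) ^ d) := by
    intro e
    rw [hS]
    simp only
    rw [box_volume (m e) (r e), ← ENNReal.ofReal_pow (show (0:ℝ) ≤ 2 * r e by linarith [hr0 e])]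
  have hreal : ∑ e ∈ A, (2 * r e) ^ d ≤ (4/3 : ℝ) ^ d := by
    have h1 : ENNReal.ofReal (∑ e ∈ A, (2 * r e) ^ d) ≤ ENNReal.ofReal ((4/3 : ℝ) ^ d) := by
      rw [ENNReal.ofReal_sum_of_nonneg (fun e _ => pow_nonneg (by linarith [hr0 e]) d)]
      calc ∑ e ∈ A, ENNReal.ofReal ((2 * r e) ^ d) = ∑ e ∈ A, volume (S e) := by
            exact Finset.sum_congr rfl (fun e _ => (hvol e).symm)
        _ ≤ _ := le_trans hsum (le_of_eq hbig)
        _ = ENNReal.ofReal ((4/3 : ℝ) ^ d) := by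
            rw [← ENNReal.ofReal_pow (show (0:ℝ) ≤ 4/3 by norm_num)]
    exact (ENNReal.ofReal_le_ofReal_iff (by positivity)).mp h1
  -- energy
  have henergy : energy v T (d : ℝ) = ∑ e ∈ A, L e ^ d := by
    rw [energy]
    refine Finset.sum_congr rfl (fun e _ => ?_)
    obtain ⟨⟨a, b⟩, rfl⟩ := e.exists_rep
    simp only [hL, elen, Sym2.lift_mk]
    rw [Real.rpow_natCast]
  have hkey : ∀ e, L e ^ d = (2 * r e) ^ d * (3 * sd) ^ d := by
    intro e
    rw [← mul_pow]
    congr 1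
    rw [hr]
    field_simp
    ring
  rw [henergy]
  have hfinal : ∑ e ∈ A, L e ^ d ≤ (4/3 : ℝ) ^ d * (3 * sd) ^ d := by
    calc ∑ e ∈ A, L e ^ d = ∑ e ∈ A, (2 * r e) ^ d * (3 * sd) ^ d :=
          Finset.sum_congr rfl (fun e _ => hkey e)
      _ = (∑ e ∈ A, (2 * r e) ^ d) * (3 * sd) ^ d := by rw [Finset.sum_mul]
      _ ≤ (4/3 : ℝ) ^ d * (3 * sd) ^ d := by
          exact mul_le_mul_of_nonneg_right hreal (by positivity)
  calc ∑ e ∈ A, L e ^ d ≤ (4/3 : ℝ) ^ d * (3 * sd) ^ d := hfinal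
    _ = (4 * sd) ^ d := by rw [← mul_pow]; congr 1; ring
    _ = (4 * sd) ^ (d : ℝ) := by rw [Real.rpow_natCast]
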